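/- arXiv:1912.10217 — 2 statements merged into one kernel-verified Lean document; each statement's English description precedes it below -/
import Mathlib

section
/- Let G ≤ Sym(Ω) and let e be a G-invariant equivalence relation on Ω. Let G_e be the intersection of the setwise stabilizers of all classes of e. Then the 2-closure of G_e is contained in (G^(2))_e, the kernel of the action of the 2-closure of G on Ω/e. -/
open MulAction

/-- The 2-closure of a permutation group `G ≤ Sym(Ω)`: all permutations of `Ω`
preserving every orbit of `G` on `Ω × Ω`. -/
def twoClosure {Ω : Type*} (G : Subgroup (Equiv.Perm Ω)) : Subgroup (Equiv.Perm Ω) where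
  carrier := {k | ∀ a b : Ω, (k a, k b) ∈ MulAction.orbit G ((a, b) : Ω × Ω)}
  one_mem' := by
    intro a b
    simp only [Equiv.Perm.one_apply]
    exact MulAction.mem_orbit_self ((a, b) : Ω × Ω)
  mul_mem' := by
    intro k l hk hl a b
    have h1 : ((l a, l b) : Ω × Ω) ∈ MulAction.orbit G ((a, b) : Ω × Ω) := hl a b
    have h2 := hk (l a) (l b)
    rw [(MulAction.orbit_eq_iff).2 h1] at h2
    simpa using h2
  inv_mem' := by
    intro k hk a b
    have h := hk (k⁻¹ a) (k⁻¹ b)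
    simp only [Equiv.Perm.inv_def, Equiv.apply_symm_apply] at h
    have := (MulAction.orbit_eq_iff).2 h
    rw [this]
    exact MulAction.mem_orbit_self _

theorem le_twoClosure {Ω : Type*} (G : Subgroup (Equiv.Perm Ω)) : G ≤ twoClosure G := by
  intro g hg a b
  exact ⟨⟨g, hg⟩, rfl⟩

/-- The subgroup of all permutations stabilizing every class of the equivalence
relation `s` setwise (i.e. `g` maps each point into its own class). -/
def classStab {Ω : Type*} (s : Setoid Ω) : Subgroup (Equiv.Perm Ω) where
  carrier := {g | ∀ a : Ω, s.r (g a) a}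
  one_mem' := fun a => s.refl' a
  mul_mem' := by
    intro g l hg hl a
    exact s.trans' (hg (l a)) (hl a)
  inv_mem' := by
    intro g hg a
    have := hg (g⁻¹ a)
    simp only [Equiv.Perm.inv_def, Equiv.apply_symm_apply] at this
    exact s.symm' this

/-- if `e` (the setoid `s`) is a `G`-invariant equivalence relation and
`G_e` is the intersection of the setwise stabilizers of the classes of `e`, then the
2-closure of `G_e` is contained in `(G^(2))_e`, the kernel of the action of the
2-closure of `G` on `Ω/e`. -/
theorem twoClosure_classKernel_le
    {Ω : Type*} [Finite Ω] (G : Subgroup (Equiv.Perm Ω)) (s : Setoid Ω)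
    (hinv : ∀ g ∈ G, ∀ a b : Ω, s.r a b → s.r (g a) (g b)) :
    twoClosure (G ⊓ classStab s) ≤ twoClosure G ⊓ classStab s := by
  intro k hk
  constructor
  · intro a b
    obtain ⟨⟨g, hg⟩, h⟩ := hk a b
    exact ⟨⟨g, hg.1⟩, h⟩
  · intro a
    obtain ⟨⟨g, hg⟩, h⟩ := hk a a
    have : g a = k a := congrArg Prod.fst h
    exact this ▸ hg.2 a
end

section
/- Let G be a transitive permutation group of prime degree p. If G is solvable, then either G is regular (cyclic of order p) or G is a Frobenius group, i.e., every two-point stabilizer in G is trivial. -/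
open MulAction
open scoped commutatorElement

/-- Galois: a transitive solvable permutation group `G` of prime degree
`p` is either regular (equivalently, cyclic of order `p`) or a Frobenius group,
i.e. every two-point stabilizer in `G` is trivial. -/
theorem solvable_transitive_prime_degree_regular_or_frobenius
    {Δ : Type*} [Fintype Δ] {p : ℕ} (hp : p.Prime) (hcard : Nat.card Δ = p)
    (G : Subgroup (Equiv.Perm Δ)) (htrans : ∀ a b : Δ, ∃ g ∈ G, g a = b)
    (hsolv : IsSolvable G) :
    (∀ g ∈ G, (∃ a : Δ, g a = a) → g = 1) ∨
    (∀ g ∈ G, ∀ a b : Δ, a ≠ b → g a = a → g b = b → g = 1) := by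
  classical
  right
  intro g hg a b hab hga hgb
  -- G is nontrivial
  obtain ⟨g0, hg0, hg0ab⟩ := htrans a b
  have hG0 : (⟨g0, hg0⟩ : ↥G) ≠ 1 := by
    intro h
    apply hab
    have : g0 = 1 := congrArg Subtype.val h
    rw [this] at hg0ab
    simpa using hg0ab
  -- minimal step of the derived series
  have hP : ∃ n : ℕ, derivedSeries ↥G n = ⊥ := hsolv.solvable
  have hk := Nat.find_spec hP
  have hkne : Nat.find hP ≠ 0 := by
    intro h
    rw [h, derivedSeries_zero] at hk
    exact hG0 (by simpa [hk] using Subgroup.mem_top (⟨g0, hg0⟩ : ↥G))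
  obtain ⟨m, hm⟩ := Nat.exists_eq_succ_of_ne_zero hkne
  have hDm : derivedSeries ↥G m ≠ ⊥ := Nat.find_min hP (by omega)
  have hDm1 : ⁅derivedSeries ↥G m, derivedSeries ↥G m⁆ = ⊥ := by
    have := hk
    rw [hm] at this
    rw [← derivedSeries_succ]
    exact this
  -- N : the image of this abelian normal subgroup in Perm Δ
  set N : Subgroup (Equiv.Perm Δ) := (derivedSeries ↥G m).map G.subtype with hNdef
  have hNle : N ≤ G := Subgroup.map_subtype_le _
  have hNcomm : ∀ x ∈ N, ∀ y ∈ N, x * y = y * x := by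
    rintro _ ⟨x, hx, rfl⟩ _ ⟨y, hy, rfl⟩
    have : ⁅x, y⁆ ∈ (⊥ : Subgroup ↥G) := hDm1 ▸ Subgroup.commutator_mem_commutator hx hy
    have hxy : x * y = y * x := by
      have := Subgroup.mem_bot.mp this
      rwa [commutatorElement_eq_one_iff_mul_comm] at this
    exact_mod_cast congrArg (Subgroup.subtype G) hxy
  have hNconj : ∀ g' ∈ G, ∀ x ∈ N, g' * x * g'⁻¹ ∈ N := by
    rintro g' hg' _ ⟨x, hx, rfl⟩
    refine ⟨⟨g', hg'⟩ * x * ⟨g', hg'⟩⁻¹, (derivedSeries_normal _ _).conj_mem x hx _, rfl⟩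
  have hNnontriv : ∃ x ∈ N, x ≠ (1 : Equiv.Perm Δ) := by
    obtain ⟨x, hx⟩ := Subgroup.ne_bot_iff_exists_ne_one.mp hDm
    refine ⟨(x : ↥G), ⟨x, x.2, rfl⟩, ?_⟩
    intro h
    exact hx (Subtype.ext (Subtype.ext h))
  -- the action of N on Δ
  have hsmul : ∀ (x : ↥N) (c : Δ), x • c = (x : Equiv.Perm Δ) c := fun _ _ => rfl
  -- all N-orbits are translates of each other
  have horb_image : ∀ g' ∈ G, ∀ c : Δ,
      (g' : Equiv.Perm Δ) '' (orbit ↥N c) = orbit ↥N (g' c) := by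
    intro g' hg' c
    ext e
    constructor
    · rintro ⟨y, ⟨x, rfl⟩, rfl⟩
      refine ⟨⟨g' * x * g'⁻¹, hNconj g' hg' x x.2⟩, ?_⟩
      show (g' * (x : Equiv.Perm Δ) * g'⁻¹) (g' c) = g' ((⟨(x : Equiv.Perm Δ), x.2⟩ : ↥N) • c)
      rw [hsmul]
      simp [Equiv.Perm.mul_apply]
    · rintro ⟨x, rfl⟩
      refine ⟨(g'⁻¹ * (x : Equiv.Perm Δ) * g') c,
        ⟨⟨g'⁻¹ * x * g'⁻¹⁻¹, hNconj g'⁻¹ (G.inv_mem hg') x x.2⟩, ?_⟩, ?_⟩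
      · show (g'⁻¹ * (x : Equiv.Perm Δ) * g'⁻¹⁻¹) c = (g'⁻¹ * (x : Equiv.Perm Δ) * g') c
        rw [inv_inv]
      · show g' ((g'⁻¹ * (x : Equiv.Perm Δ) * g') c) = (x : ↥N) • (g' c)
        rw [hsmul]
        simp [Equiv.Perm.mul_apply]
  have horb_card : ∀ c e : Δ, Nat.card (orbit ↥N c) = Nat.card (orbit ↥N e) := by
    intro c e
    obtain ⟨g', hg', rfl⟩ := htrans c e
    rw [← horb_image g' hg' c]
    exact Nat.card_congr (Equiv.Set.image _ _ (g' : Equiv.Perm Δ).injective)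
  -- counting: the common orbit size divides p
  set d : ℕ := Nat.card (orbit ↥N a) with hd
  letI : Fintype (orbitRel.Quotient ↥N Δ) := Fintype.ofFinite _
  have hcount : p = Fintype.card (orbitRel.Quotient ↥N Δ) * d := by
    have h1 : Nat.card Δ = Nat.card (Σ ω : orbitRel.Quotient ↥N Δ, orbit ↥N ω.out) :=
      Nat.card_congr (selfEquivSigmaOrbits ↥N Δ)
    letI : ∀ ω : orbitRel.Quotient ↥N Δ, Fintype (orbit ↥N (Quotient.out ω)) :=
      fun ω => Fintype.ofFinite _
    rw [hcard, Nat.card_eq_fintype_card, Fintype.card_sigma] at h1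
    have h2 : ∀ ω : orbitRel.Quotient ↥N Δ, Fintype.card (orbit ↥N (Quotient.out ω)) = d :=
      fun ω => by rw [← Nat.card_eq_fintype_card]; exact horb_card _ _
    rw [h1, Finset.sum_congr rfl (fun ω _ => h2 ω), Finset.sum_const, smul_eq_mul,
      Finset.card_univ]
  have hdvd : d ∣ p := ⟨_, by rw [hcount, mul_comm]⟩
  -- orbit size is not 1
  have hd1 : d ≠ 1 := by
    intro h1
    obtain ⟨x, hx, hxne⟩ := hNnontriv
    apply hxne
    ext c
    have hcc : Nat.card (orbit ↥N c) = 1 := (horb_card c a).trans (hd ▸ h1)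
    have hsub : Subsingleton (orbit ↥N c) :=
      (Nat.card_eq_one_iff_unique.mp hcc).1
    have h1' : (⟨x, hx⟩ : ↥N) • c ∈ orbit ↥N c := mem_orbit _ _
    have h2' : c ∈ orbit ↥N c := mem_orbit_self _
    have := Subsingleton.elim (⟨_, h1'⟩ : orbit ↥N c) ⟨_, h2'⟩
    have := congrArg Subtype.val this
    simpa [hsmul] using this
  have hdp : d = p := ((hp.eq_one_or_self_of_dvd d hdvd).resolve_left hd1)
  -- N is transitive
  have htransN : ∀ c e : Δ, ∃ x ∈ N, x c = e := by
    intro c e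
    have horbcard : (orbit ↥N c).ncard = (Set.univ : Set Δ).ncard := by
      have h1 : Nat.card (orbit ↥N c) = p := by rw [horb_card c a, ← hd, hdp]
      have h2 : Nat.card (Set.univ : Set Δ) = p := by
        rw [Nat.card_congr (Equiv.Set.univ Δ), hcard]
      rw [← Nat.card_coe_set_eq, ← Nat.card_coe_set_eq, h1, h2]
    have : orbit ↥N c = Set.univ := by
      apply Set.eq_of_subset_of_ncard_le (Set.subset_univ _) (le_of_eq horbcard.symm)
    have he : e ∈ orbit ↥N c := this ▸ Set.mem_univ e
    obtain ⟨x, hx⟩ := he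
    exact ⟨(x : Equiv.Perm Δ), x.2, hx⟩
  -- N is regular: nontrivial elements have no fixed points
  have hreg : ∀ x ∈ N, ∀ c : Δ, x c = c → x = 1 := by
    intro x hx c hc
    ext e
    obtain ⟨y, hy, rfl⟩ := htransN c e
    have := hNcomm x hx y hy
    calc x (y c) = (x * y) c := rfl
      _ = (y * x) c := by rw [this]
      _ = y (x c) := rfl
      _ = y c := by rw [hc]
  -- N has cardinality p
  have hcardN : Nat.card ↥N = p := by
    rw [← hcard]
    apply Nat.card_eq_of_bijective (fun x : ↥N => (x : Equiv.Perm Δ) a)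
    constructor
    · intro x y hxy
      have : ((y⁻¹ * x : ↥N) : Equiv.Perm Δ) a = a := by
        simp only [Subgroup.coe_mul, Equiv.Perm.mul_apply, hxy]
        simp
      have := hreg _ (y⁻¹ * x : ↥N).2 a this
      have h9 : (y⁻¹ * x : ↥N) = 1 := Subtype.ext this
      rw [mul_eq_one_iff_eq_inv] at h9
      exact (inv_injective h9).symm
    · intro e
      obtain ⟨x, hx, hxe⟩ := htransN a e
      exact ⟨⟨x, hx⟩, hxe⟩
  -- get n ∈ N with n a = b; it generates N
  obtain ⟨n, hn, hnab⟩ := htransN a b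
  have hnne : (⟨n, hn⟩ : ↥N) ≠ 1 := by
    intro h
    apply hab
    have : n = 1 := congrArg Subtype.val h
    rw [this] at hnab
    simpa using hnab
  have horder : orderOf (⟨n, hn⟩ : ↥N) = p := by
    have h1 : orderOf (⟨n, hn⟩ : ↥N) ∣ p := hcardN ▸ orderOf_dvd_natCard _
    rcases hp.eq_one_or_self_of_dvd _ h1 with h | h
    · exact absurd (orderOf_eq_one_iff.mp h) hnne
    · exact h
  have hzpow : Subgroup.zpowers (⟨n, hn⟩ : ↥N) = ⊤ := by
    apply Subgroup.eq_top_of_card_eq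
    rw [Nat.card_zpowers, horder, hcardN]
  -- conjugation of n by g is a power of n
  have hgng : g * n * g⁻¹ ∈ N := hNconj g hg n hn
  obtain ⟨k, hk'⟩ : ∃ k : ℤ, (⟨n, hn⟩ : ↥N) ^ k = ⟨g * n * g⁻¹, hgng⟩ := by
    have : (⟨g * n * g⁻¹, hgng⟩ : ↥N) ∈ Subgroup.zpowers (⟨n, hn⟩ : ↥N) := by
      rw [hzpow]; trivial
    exact this
  have hk'' : n ^ k = g * n * g⁻¹ := by
    have := congrArg (Subgroup.subtype N) hk'
    simpa using this
  -- evaluate at a : (n^k) a = g (n a) = g b = b = n a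
  have hga' : g⁻¹ a = a := by
    apply g.injective
    rw [← Equiv.Perm.mul_apply, mul_inv_cancel, Equiv.Perm.one_apply, hga]
  have heval : (n ^ k) a = n a := by
    rw [hk'']
    show g (n (g⁻¹ a)) = n a
    rw [hga', hnab]
    exact hgb
  -- hence n^(k) = n, so g commutes with n
  have hnk : n ^ k = n := by
    have hmem : n⁻¹ * n ^ k ∈ N := N.mul_mem (N.inv_mem hn) (N.zpow_mem hn k)
    have hfix : (n⁻¹ * n ^ k) a = a := by
      rw [Equiv.Perm.mul_apply, heval]
      simp
    have h9 := hreg _ hmem a hfix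
    rw [mul_eq_one_iff_eq_inv] at h9
    exact (inv_injective h9).symm
  have hcomm : Commute g n := by
    have h' : g * n * g⁻¹ = n := by rw [← hk'', hnk]
    show g * n = n * g
    calc g * n = (g * n * g⁻¹) * g := by group
      _ = n * g := by rw [h']
  -- g commutes with every element of N, hence fixes every point
  have hgcomm : ∀ x ∈ N, g * x = x * g := by
    intro x hx
    have : (⟨x, hx⟩ : ↥N) ∈ Subgroup.zpowers (⟨n, hn⟩ : ↥N) := by rw [hzpow]; trivial
    obtain ⟨j, hj⟩ := this
    have hxj : n ^ j = x := by
      have := congrArg (Subgroup.subtype N) hj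
      simpa using this
    rw [← hxj]
    exact (hcomm.zpow_right j).eq
  ext c
  obtain ⟨x, hx, hxc⟩ := htransN a c
  calc g c = g (x a) := by rw [hxc]
    _ = (g * x) a := rfl
    _ = (x * g) a := by rw [hgcomm x hx]
    _ = x (g a) := rfl
    _ = x a := by rw [hga]
    _ = c := hxc
end
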